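/- arXiv:2509.07251 — 2 statements merged into one kernel-verified Lean document; each statement's English description precedes it below -/
import Mathlib

section
/- Let L : H → G be bounded linear with 0 < ‖L‖ ≤ 1, let B be strictly positive on G, and let 0 < ρ ≤ γ. Then L ⊡_γ B ≼ L ⊡_ρ B, i.e., the resolvent cocomposition γ ↦ L* ∘ (B⁻¹ + γ(Id_G − L L*))⁻¹ ∘ L is monotonically decreasing in γ with respect to the Löwner order. -/
open ContinuousLinearMap MeasureTheory

noncomputable section

variable {E : Type*} [NormedAddCommGroup E] [InnerProductSpace ℝ E] [CompleteSpace E]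
variable {H G : Type*} [NormedAddCommGroup H] [InnerProductSpace ℝ H] [CompleteSpace H]
  [NormedAddCommGroup G] [InnerProductSpace ℝ G] [CompleteSpace G]

/-- Löwner partial order: `A ≼ B` iff `B - A` is a positive operator. -/
def Loewner (A B : E →L[ℝ] E) : Prop := (B - A).IsPositive

/-- Strictly positive operators: `α • Id ≼ A` for some `α > 0`. -/
def StrictlyPos (A : E →L[ℝ] E) : Prop :=
  IsSelfAdjoint A ∧ ∃ α : ℝ, 0 < α ∧ Loewner (α • (1 : E →L[ℝ] E)) A

/-- Bounded below linear operator. -/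
def BoundedBelow (L : H →L[ℝ] G) : Prop := ∃ β : ℝ, 0 < β ∧ ∀ x : H, β * ‖x‖ ≤ ‖L x‖

/-- Resolvent cocomposition `L ⊡_γ B = L* ∘ (B⁻¹ + γ(Id − L L*))⁻¹ ∘ L`. -/
def rcc (L : H →L[ℝ] G) (γ : ℝ) (B : G →L[ℝ] G) : H →L[ℝ] H :=
  (adjoint L) ∘L (Ring.inverse (Ring.inverse B + γ • ((1 : G →L[ℝ] G) - L ∘L adjoint L))) ∘L L

/-- Resolvent composition `L ⊙_γ B = (L ⊡_{1/γ} B⁻¹)⁻¹`. -/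
def rc (L : H →L[ℝ] G) (γ : ℝ) (B : G →L[ℝ] G) : H →L[ℝ] H :=
  Ring.inverse (rcc L (1/γ) (Ring.inverse B))

/-- Parallel composition `L* ▸ B = (L* ∘ B⁻¹ ∘ L)⁻¹`. -/
def parallelComp (L : H →L[ℝ] G) (B : G →L[ℝ] G) : H →L[ℝ] H :=
  Ring.inverse ((adjoint L) ∘L (Ring.inverse B) ∘L L)

/-- `g(A,B) = inf {λ > 0 : A ≼ λ B}`. -/
def gThomp (A B : E →L[ℝ] E) : ℝ := sInf {l : ℝ | 0 < l ∧ Loewner A (l • B)}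

/-- Thompson metric. -/
def dThomp (A B : E →L[ℝ] E) : ℝ := Real.log (max (gThomp A B) (gThomp B A))

/-- The (unique) positive square root of a positive operator. -/
def opSqrt (A : E →L[ℝ] E) : E →L[ℝ] E :=
  letI := Classical.propDecidable
  if h : ∃ S : E →L[ℝ] E, S.IsPositive ∧ S * S = A then h.choose else 0

/-- Real power `A^t` of a strictly positive operator, `t ∈ (0,1)`, via the
Balakrishnan integral formula `A^t = (sin (π t)/π) ∫₀^∞ s^{t-1} A (A + s)⁻¹ ds`. -/
def opRpow (A : E →L[ℝ] E) (t : ℝ) : E →L[ℝ] E :=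
  (Real.sin (Real.pi * t) / Real.pi) •
    ∫ s in Set.Ioi (0 : ℝ), s ^ (t - 1) • (A * Ring.inverse (A + s • (1 : E →L[ℝ] E)))

/-- Geometric mean `A # B = A^{1/2} (A^{-1/2} B A^{-1/2})^{1/2} A^{1/2}`. -/
def geomMean (A B : E →L[ℝ] E) : E →L[ℝ] E :=
  opSqrt A * opSqrt (Ring.inverse (opSqrt A) * B * Ring.inverse (opSqrt A)) * opSqrt A

/-- `t`-weighted geometric mean `A #_t B = A^{1/2} (A^{-1/2} B A^{-1/2})^t A^{1/2}`. -/
def wGeomMean (t : ℝ) (A B : E →L[ℝ] E) : E →L[ℝ] E :=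
  opSqrt A * opRpow (Ring.inverse (opSqrt A) * B * Ring.inverse (opSqrt A)) t * opSqrt A

lemma sa_one : IsSelfAdjoint (1 : E →L[ℝ] E) := star_one _

open RealInnerProductSpace in
lemma isPositive_iff_real (T : E →L[ℝ] E) :
    T.IsPositive ↔ IsSelfAdjoint T ∧ ∀ x, 0 ≤ ⟪T x, x⟫ := by
  simp [ContinuousLinearMap.IsPositive, ContinuousLinearMap.reApplyInnerSelf_apply,
    ContinuousLinearMap.isSelfAdjoint_iff_isSymmetric]

open RealInnerProductSpace in
lemma sp_lower {A : E →L[ℝ] E} {α : ℝ} (h : Loewner (α • (1 : E →L[ℝ] E)) A) (x : E) :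
    α * ‖x‖ ^ 2 ≤ ⟪A x, x⟫ := by
  have := ((isPositive_iff_real _).1 h).2 x
  simp only [ContinuousLinearMap.sub_apply, ContinuousLinearMap.smul_apply,
    ContinuousLinearMap.one_apply, inner_sub_left, real_inner_smul_left] at this
  have h2 : ⟪x, x⟫ = ‖x‖ ^ 2 := real_inner_self_eq_norm_sq x
  rw [h2] at this
  linarith

open RealInnerProductSpace in
lemma sp_isPositive {A : E →L[ℝ] E} (hA : StrictlyPos A) : A.IsPositive := by
  obtain ⟨hsa, α, hα, hL⟩ := hA
  refine (isPositive_iff_real _).2 ⟨hsa, fun x => ?_⟩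
  have := sp_lower hL x
  nlinarith [sq_nonneg ‖x‖]

open RealInnerProductSpace in
/-- A strictly positive operator is a unit in the ring of continuous endomorphisms. -/
lemma sp_isUnit {A : E →L[ℝ] E} (hA : StrictlyPos A) : IsUnit A := by
  obtain ⟨hsa, α, hα, hL⟩ := hA
  set b : E →L[ℝ] E →L[ℝ] ℝ := (innerSL ℝ).comp A with hb
  have hbapp : ∀ v w, b v w = ⟪A v, w⟫ := fun v w => rfl
  have coercive : IsCoercive b := by
    refine ⟨α, hα, fun u => ?_⟩
    have := sp_lower hL u
    rw [hbapp]
    nlinarith [this]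
  set e := coercive.continuousLinearEquivOfBilin with he
  have hev : ∀ v, e v = A v := by
    intro v
    apply ext_inner_right (𝕜 := ℝ)
    intro w
    rw [coercive.continuousLinearEquivOfBilin_apply, hbapp]
  refine ⟨⟨A, (e.symm : E →L[ℝ] E), ?_, ?_⟩, rfl⟩ <;> ext x
  · show A (e.symm x) = x
    rw [← hev]; simp
  · show e.symm (A x) = x
    rw [← hev]; simp

lemma rinv_mul_self {A : E →L[ℝ] E} (hA : IsUnit A) : Ring.inverse A * A = 1 :=
  Ring.inverse_mul_cancel A hA

lemma self_mul_rinv {A : E →L[ℝ] E} (hA : IsUnit A) : A * Ring.inverse A = 1 :=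
  Ring.mul_inverse_cancel A hA

lemma inv_selfAdjoint {A : E →L[ℝ] E} (hsa : IsSelfAdjoint A) (hu : IsUnit A) :
    IsSelfAdjoint (Ring.inverse A) := by
  have h1 : star (Ring.inverse A) * A = 1 := by
    have := congrArg star (self_mul_rinv hu)
    rwa [star_mul, hsa.star_eq, star_one] at this
  have : star (Ring.inverse A) = star (Ring.inverse A) * (A * Ring.inverse A) := by
    rw [self_mul_rinv hu, mul_one]
  rw [IsSelfAdjoint, this, ← mul_assoc, h1, one_mul]

open RealInnerProductSpace in
/-- Cauchy–Schwarz for the semi-inner product induced by a positive operator. -/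
lemma pos_cauchy_schwarz {A : E →L[ℝ] E} (hA : A.IsPositive) (u v : E) :
    ⟪A u, v⟫ ^ 2 ≤ ⟪A u, u⟫ * ⟪A v, v⟫ := by
  obtain ⟨hsa, hpos⟩ := (isPositive_iff_real _).1 hA
  have hsymm : ∀ x y : E, ⟪A x, y⟫ = ⟪A y, x⟫ := by
    intro x y
    calc ⟪A x, y⟫ = ⟪x, A y⟫ := by
          rw [← ContinuousLinearMap.adjoint_inner_left, hsa.adjoint_eq]
      _ = ⟪A y, x⟫ := real_inner_comm _ _
  have key : ∀ t : ℝ, 0 ≤ ⟪A v, v⟫ * (t * t) + (2 * ⟪A u, v⟫) * t + ⟪A u, u⟫ := by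
    intro t
    have h0 := hpos (u + t • v)
    have hexp : ⟪A (u + t • v), u + t • v⟫
        = ⟪A u, u⟫ + t * ⟪A u, v⟫ + t * ⟪A v, u⟫ + t * t * ⟪A v, v⟫ := by
      rw [ContinuousLinearMap.map_add, ContinuousLinearMap.map_smul]
      simp only [inner_add_left, inner_add_right, real_inner_smul_left, real_inner_smul_right]
      ring
    rw [hexp] at h0
    have hs := hsymm u v
    rw [← hs] at h0
    nlinarith [h0]
  have hd := discrim_le_zero key
  rw [discrim] at hd
  nlinarith [hd]

open RealInnerProductSpace in
/-- Inversion is antitone with respect to the Löwner order. -/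
lemma loewner_inverse {A C : E →L[ℝ] E} (hA : StrictlyPos A) (hC : StrictlyPos C)
    (h : Loewner A C) : Loewner (Ring.inverse C) (Ring.inverse A) := by
  have huA := sp_isUnit hA
  have huC := sp_isUnit hC
  have hAi := inv_selfAdjoint hA.1 huA
  have hCi := inv_selfAdjoint hC.1 huC
  refine (isPositive_iff_real _).2 ⟨hAi.sub hCi, fun x => ?_⟩
  set u := Ring.inverse A x with hu
  set v := Ring.inverse C x with hv
  have hAu : A u = x := by
    have := congrArg (fun T : E →L[ℝ] E => T x) (self_mul_rinv huA)
    simpa [ContinuousLinearMap.mul_apply] using this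
  have hCv : C v = x := by
    have := congrArg (fun T : E →L[ℝ] E => T x) (self_mul_rinv huC)
    simpa [ContinuousLinearMap.mul_apply] using this
  have hApos := sp_isPositive hA
  have hCpos := sp_isPositive hC
  have hb : 0 ≤ ⟪A u, u⟫ := ((isPositive_iff_real _).1 hApos).2 u
  have ha : 0 ≤ ⟪C v, v⟫ := ((isPositive_iff_real _).1 hCpos).2 v
  have hAvCv : ⟪A v, v⟫ ≤ ⟪C v, v⟫ := by
    have := ((isPositive_iff_real _).1 h).2 v
    simp only [ContinuousLinearMap.sub_apply, inner_sub_left] at this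
    linarith
  have hAvv : 0 ≤ ⟪A v, v⟫ := ((isPositive_iff_real _).1 hApos).2 v
  have hcs := pos_cauchy_schwarz hApos u v
  have hkey : ⟪C v, v⟫ = ⟪A u, v⟫ := by rw [hAu, ← hCv]
  -- From `a² = ⟪Au,v⟫² ≤ b·⟪Av,v⟫ ≤ b·a` conclude `a ≤ b`.
  have hmain : ⟪C v, v⟫ ≤ ⟪A u, u⟫ := by
    rcases eq_or_lt_of_le ha with h0 | h0
    · linarith
    · nlinarith [hcs, hkey, hAvCv, hb, h0, mul_le_mul_of_nonneg_left hAvCv hb]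
  have hgoal : ⟪(Ring.inverse A - Ring.inverse C) x, x⟫
      = ⟪A u, u⟫ - ⟪C v, v⟫ := by
    simp only [ContinuousLinearMap.sub_apply, inner_sub_left, ← hu, ← hv]
    have h1 : ⟪u, x⟫ = ⟪A u, u⟫ := by rw [← hAu]; exact real_inner_comm _ _
    have h2 : ⟪v, x⟫ = ⟪C v, v⟫ := by rw [← hCv]; exact real_inner_comm _ _
    rw [h1, h2]
  rw [hgoal]
  linarith

open RealInnerProductSpace in
lemma smul_isPositive {T : E →L[ℝ] E} (hT : T.IsPositive) {c : ℝ} (hc : 0 ≤ c) :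
    (c • T).IsPositive := by
  obtain ⟨hsa, hpos⟩ := (isPositive_iff_real _).1 hT
  refine (isPositive_iff_real _).2 ⟨?_, fun x => ?_⟩
  · exact (IsSelfAdjoint.all c).smul hsa
  · simp only [ContinuousLinearMap.smul_apply, inner_smul_left]
    exact mul_nonneg hc (hpos x)

open RealInnerProductSpace in
set_option maxHeartbeats 1000000 in
theorem rcc_antitone_in_gamma (L : H →L[ℝ] G) (hL0 : 0 < ‖L‖) (hL1 : ‖L‖ ≤ 1)
    (B : G →L[ℝ] G) (hB : StrictlyPos B) (ρ γ : ℝ) (hρ : 0 < ρ) (hργ : ρ ≤ γ) :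
    Loewner (rcc L γ B) (rcc L ρ B) := by
  obtain ⟨hBsa, α, hα, hBL⟩ := hB
  have hBsp : StrictlyPos B := ⟨hBsa, α, hα, hBL⟩
  have huB := sp_isUnit hBsp
  set Bi : G →L[ℝ] G := Ring.inverse B with hBidef
  set Ψ : G →L[ℝ] G := (1 : G →L[ℝ] G) - L ∘L adjoint L with hΨdef
  have hΨsa : IsSelfAdjoint Ψ := by
    have h1 : IsSelfAdjoint (L ∘L adjoint L) := by
      rw [isSelfAdjoint_iff']
      rw [adjoint_comp, adjoint_adjoint]
    exact sa_one.sub h1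
  have hΨ : Ψ.IsPositive := by
    refine (isPositive_iff_real _).2 ⟨hΨsa, fun x => ?_⟩
    have h1 : ⟪(L ∘L adjoint L) x, x⟫ = ‖adjoint L x‖ ^ 2 := by
      rw [ContinuousLinearMap.coe_comp', Function.comp_apply,
        ← ContinuousLinearMap.adjoint_inner_right]
      exact real_inner_self_eq_norm_sq _
    have h2 : ‖adjoint L x‖ ≤ ‖x‖ := by
      calc ‖adjoint L x‖ ≤ ‖adjoint L‖ * ‖x‖ := (adjoint L).le_opNorm x
        _ = ‖L‖ * ‖x‖ := by rw [LinearIsometryEquiv.norm_map adjoint L]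
        _ ≤ 1 * ‖x‖ := by gcongr
        _ = ‖x‖ := one_mul _
    have h3 : ⟪x, x⟫ = ‖x‖ ^ 2 := real_inner_self_eq_norm_sq x
    simp only [hΨdef, ContinuousLinearMap.sub_apply, ContinuousLinearMap.one_apply,
      inner_sub_left]
    rw [h1, h3]
    nlinarith [norm_nonneg (adjoint L x), norm_nonneg x]
  have hBisa : IsSelfAdjoint Bi := inv_selfAdjoint hBsa huB
  set α' : ℝ := α / (‖B‖ ^ 2 + 1) with hα'def
  have hα' : 0 < α' := div_pos hα (by positivity)
  have hBiL : Loewner (α' • (1 : G →L[ℝ] G)) Bi := by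
    refine (isPositive_iff_real _).2
      ⟨hBisa.sub ((IsSelfAdjoint.all α').smul sa_one), fun x => ?_⟩
    set y := Bi x with hy
    have hBy : B y = x := by
      have := congrArg (fun T : G →L[ℝ] G => T x) (self_mul_rinv huB)
      simpa [ContinuousLinearMap.mul_apply] using this
    have h1 : ⟪Bi x, x⟫ = ⟪B y, y⟫ := by
      rw [← hy, ← hBy]; exact real_inner_comm _ _
    have h2 : α * ‖y‖ ^ 2 ≤ ⟪B y, y⟫ := sp_lower hBL y
    have h3 : ‖x‖ ≤ ‖B‖ * ‖y‖ := by rw [← hBy]; exact B.le_opNorm y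
    have h4 : ⟪x, x⟫ = ‖x‖ ^ 2 := real_inner_self_eq_norm_sq x
    have h5 : α' * (‖B‖ ^ 2 + 1) = α := by
      rw [hα'def]
      exact div_mul_cancel₀ α (by positivity)
    simp only [ContinuousLinearMap.sub_apply, ContinuousLinearMap.smul_apply,
      ContinuousLinearMap.one_apply, inner_sub_left, real_inner_smul_left]
    rw [h4]
    have h6 : ‖x‖ ^ 2 ≤ ‖B‖ ^ 2 * ‖y‖ ^ 2 := by
      nlinarith [norm_nonneg x, norm_nonneg y, norm_nonneg B]
    nlinarith [h1, h2, h5, h6, hα'.le, norm_nonneg y, sq_nonneg ‖y‖]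
  have mkSP : ∀ t : ℝ, 0 ≤ t → StrictlyPos (Bi + t • Ψ) := by
    intro t ht
    refine ⟨hBisa.add ((IsSelfAdjoint.all t).smul hΨsa), α', hα', ?_⟩
    have heq : Bi + t • Ψ - α' • (1 : G →L[ℝ] G)
        = (Bi - α' • (1 : G →L[ℝ] G)) + t • Ψ := by abel
    show (Bi + t • Ψ - α' • (1 : G →L[ℝ] G)).IsPositive
    rw [heq]
    exact hBiL.add (smul_isPositive hΨ ht)
  have hAρ := mkSP ρ hρ.le
  have hAγ := mkSP γ (hρ.trans_le hργ).le
  have h1 : Loewner (Bi + ρ • Ψ) (Bi + γ • Ψ) := by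
    have heq : Bi + γ • Ψ - (Bi + ρ • Ψ) = (γ - ρ) • Ψ := by
      rw [sub_smul]; abel
    show (Bi + γ • Ψ - (Bi + ρ • Ψ)).IsPositive
    rw [heq]
    exact smul_isPositive hΨ (by linarith)
  have h2 := loewner_inverse hAρ hAγ h1
  show (rcc L ρ B - rcc L γ B).IsPositive
  have heq : rcc L ρ B - rcc L γ B
      = adjoint L ∘L (Ring.inverse (Bi + ρ • Ψ) - Ring.inverse (Bi + γ • Ψ)) ∘L L := by
    simp only [rcc, hBidef, hΨdef]
    rw [← ContinuousLinearMap.comp_sub, ← ContinuousLinearMap.sub_comp]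
  rw [heq]
  exact h2.adjoint_conj L

end
end

section
/- Let L : H → G be bounded linear with 0 < ‖L‖ ≤ 1 and let B be strictly positive on G. Then L ⊡_γ B → L* ∘ B ∘ L in operator norm as γ → 0⁺, where L ⊡_γ B = L* ∘ (B⁻¹ + γ(Id_G − L L*))⁻¹ ∘ L. -/
open ContinuousLinearMap MeasureTheory

noncomputable section

variable {E : Type*} [NormedAddCommGroup E] [InnerProductSpace ℝ E] [CompleteSpace E]
variable {H G : Type*} [NormedAddCommGroup H] [InnerProductSpace ℝ H] [CompleteSpace H]
  [NormedAddCommGroup G] [InnerProductSpace ℝ G] [CompleteSpace G]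

private lemma StrictlyPos.isUnit' {A : E →L[ℝ] E} (h : StrictlyPos A) : IsUnit A := by
  obtain ⟨_, α, hα, hpos⟩ := h
  have hco : IsCoercive ((innerSL ℝ).comp A) := by
    refine ⟨α, hα, fun u => ?_⟩
    have := hpos.2 u
    simp only [reApplyInnerSelf, sub_apply, smul_apply, one_apply, inner_sub_left,
      inner_smul_left, RCLike.re_to_real, real_inner_self_eq_norm_sq, starRingEnd_apply,
      star_trivial, pow_two] at this
    rw [show (1 : E →L[ℝ] E) u = u from rfl, real_inner_self_eq_norm_sq] at this
    simp only [coe_comp', Function.comp_apply, innerSL_apply_apply]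
    nlinarith [this]
  have key : ∀ v, (hco.continuousLinearEquivOfBilin v : E) = A v := by
    intro v
    refine ext_inner_right ℝ fun w => ?_
    simpa using hco.continuousLinearEquivOfBilin_apply v w
  have hAe : (hco.continuousLinearEquivOfBilin : E →L[ℝ] E) = A := by
    ext v; exact key v
  rw [← hAe]
  exact ⟨(ContinuousLinearEquiv.unitsEquiv ℝ E).symm hco.continuousLinearEquivOfBilin, rfl⟩

theorem rcc_tendsto_comp (L : H →L[ℝ] G) (hL0 : 0 < ‖L‖) (hL1 : ‖L‖ ≤ 1)
    (B : G →L[ℝ] G) (hB : StrictlyPos B) :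
    Filter.Tendsto (fun γ : ℝ => rcc L γ B) (nhdsWithin 0 (Set.Ioi 0))
      (nhds ((adjoint L) ∘L B ∘L L)) := by
  obtain ⟨u, rfl⟩ := hB.isUnit'
  unfold rcc
  simp only [Ring.inverse_unit]
  have h1 : Filter.Tendsto (fun γ : ℝ =>
      ((u⁻¹ : (G →L[ℝ] G)ˣ) : G →L[ℝ] G) + γ • ((1 : G →L[ℝ] G) - L ∘L adjoint L))
      (nhdsWithin 0 (Set.Ioi 0)) (nhds ((u⁻¹ : (G →L[ℝ] G)ˣ) : G →L[ℝ] G)) := by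
    have hc : ContinuousAt (fun γ : ℝ =>
        ((u⁻¹ : (G →L[ℝ] G)ˣ) : G →L[ℝ] G) + γ • ((1 : G →L[ℝ] G) - L ∘L adjoint L)) 0 := by
      fun_prop
    have h0 := hc.tendsto
    simp only [zero_smul, add_zero] at h0
    exact h0.mono_left nhdsWithin_le_nhds
  have h2 := (NormedRing.inverse_continuousAt u⁻¹).tendsto.comp h1
  rw [Ring.inverse_unit, inv_inv] at h2
  have h3 : Continuous (fun T : G →L[ℝ] G => (adjoint L) ∘L T ∘L L) :=
    ((compL ℝ H G H (adjoint L)).comp ((compL ℝ H G G).flip L)).continuous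
  exact (h3.tendsto _).comp h2

end
end
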